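/- Let h_1,…,h_K > 0, σ > 0 and P > 0. Define g* = sqrt((1/P) ∑_{k=1}^K (P h_k/(σ² + P h_k²))²) and b*_k = (P h_k/(σ² + P h_k²)) · sqrt(P / ∑_{j=1}^K (P h_j/(σ² + P h_j²))²) for each k. Then ∑_{k=1}^K (b*_k)² = P and ∑_{k=1}^K (g* h_k b*_k − 1)² + σ² (g*)² = ∑_{k=1}^K σ²/(σ² + P h_k²). -/

import Mathlib

/-- The optimal scaling factors of Theorem 1 use the full power budget
and achieve MSE `∑ k σ²/(σ² + P (h k)²)`:  with
`g* = sqrt((1/P) ∑ k (P h k/(σ² + P h k²))²)` and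
`b* k = (P h k/(σ² + P h k²)) · sqrt(P / ∑ j (P h j/(σ² + P h j²))²)` one has
`∑ k (b* k)² = P` and `∑ k (g* h k b* k − 1)² + σ² g*² = ∑ k σ²/(σ² + P h k²)`. -/
theorem aircomp_theorem1_attainment (K : ℕ) (hK : 1 ≤ K) (h : Fin K → ℝ)
    (hh : ∀ k, 0 < h k) (σ P : ℝ) (hσ : 0 < σ) (hP : 0 < P)
    (gstar : ℝ) (bstar : Fin K → ℝ)
    (hg : gstar = Real.sqrt ((1 / P) * ∑ k, (P * h k / (σ ^ 2 + P * h k ^ 2)) ^ 2))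
    (hb : ∀ k, bstar k = (P * h k / (σ ^ 2 + P * h k ^ 2)) *
        Real.sqrt (P / ∑ j, (P * h j / (σ ^ 2 + P * h j ^ 2)) ^ 2)) :
    (∑ k, bstar k ^ 2) = P
    ∧ (∑ k, (gstar * h k * bstar k - 1) ^ 2) + σ ^ 2 * gstar ^ 2
        = ∑ k, σ ^ 2 / (σ ^ 2 + P * h k ^ 2) := by
  haveI : NeZero K := ⟨by omega⟩
  have hD : ∀ k : Fin K, 0 < σ ^ 2 + P * h k ^ 2 := fun k => by
    have := hh k; positivity
  set c : Fin K → ℝ := fun k => P * h k / (σ ^ 2 + P * h k ^ 2) with hc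
  have hcpos : ∀ k, 0 < c k := fun k => div_pos (by have := hh k; positivity) (hD k)
  have hSpos : 0 < ∑ k, c k ^ 2 :=
    Finset.sum_pos (fun k _ => by have := hcpos k; positivity) Finset.univ_nonempty
  set S := ∑ k, c k ^ 2 with hS
  have hsq : Real.sqrt (P / S) ^ 2 = P / S := Real.sq_sqrt (by positivity)
  have hgsq : gstar ^ 2 = (1 / P) * S := by
    rw [hg]; exact Real.sq_sqrt (by positivity)
  have hsum1 : (∑ k, bstar k ^ 2) = P := by
    have : (∑ k, bstar k ^ 2) = ∑ k, c k ^ 2 * (P / S) := by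
      apply Finset.sum_congr rfl
      intro k _
      rw [hb k, mul_pow, hsq]
    rw [this, ← Finset.sum_mul, ← hS]
    field_simp
  refine ⟨hsum1, ?_⟩
  have hgb : ∀ k, gstar * bstar k = h k * (P / (σ ^ 2 + P * h k ^ 2)) := by
    intro k
    rw [hg, hb k]
    rw [show Real.sqrt ((1 / P) * ∑ k, (P * h k / (σ ^ 2 + P * h k ^ 2)) ^ 2) *
        ((P * h k / (σ ^ 2 + P * h k ^ 2)) *
          Real.sqrt (P / ∑ j, (P * h j / (σ ^ 2 + P * h j ^ 2)) ^ 2)) =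
        (Real.sqrt ((1 / P) * S) * Real.sqrt (P / S)) * c k by rw [hc]; ring]
    rw [← Real.sqrt_mul (by positivity)]
    have : (1 / P) * S * (P / S) = 1 := by field_simp
    rw [this, Real.sqrt_one, one_mul, hc]
    field_simp
  have : (∑ k, (gstar * h k * bstar k - 1) ^ 2) + σ ^ 2 * gstar ^ 2
      = ∑ k, ((h k * (P / (σ ^ 2 + P * h k ^ 2)) * h k - 1) ^ 2 + σ ^ 2 / P * c k ^ 2) := by
    rw [Finset.sum_add_distrib, ← Finset.mul_sum, ← hS, hgsq]
    congr 1
    · apply Finset.sum_congr rfl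
      intro k _
      have : gstar * h k * bstar k = h k * (P / (σ ^ 2 + P * h k ^ 2)) * h k := by
        rw [show gstar * h k * bstar k = gstar * bstar k * h k by ring, hgb k]
      rw [this]
    · ring
  rw [this]
  apply Finset.sum_congr rfl
  intro k _
  have hDk := hD k
  rw [hc]
  field_simp
  ring
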